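/- The singular series is monotone along primorials and dominates all smaller even values: if $d$ is a positive even integer with $d < p_k^{\sharp}$, then $\mathfrak{S}(d) \le \mathfrak{S}(p_{k-1}^{\sharp}) < \mathfrak{S}(p_k^{\sharp})$. -/

import Mathlib

/-- The `k`-th nthPrimorial, the product of the first `k` primes. -/
noncomputable def nthPrimorial (k : ℕ) : ℕ := ∏ j ∈ Finset.range k, Nat.nth Nat.Prime j

/-- The singular series `𝔖(d) = 2 C₂ ∏_{p ∣ d, p > 2} (1 + 1/(p-2))` with constant `C₂`. -/
noncomputable def singSeries (C₂ : ℝ) (d : ℕ) : ℝ :=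
  2 * C₂ * ∏ p ∈ d.primeFactors.filter (fun p => 2 < p), (1 + 1 / ((p : ℝ) - 2))

open Finset

private lemma infp : (setOf Nat.Prime).Infinite := Nat.infinite_setOf_prime

private lemma nthp_prime (j : ℕ) : (Nat.nth Nat.Prime j).Prime :=
  Nat.nth_mem_of_infinite infp j

private lemma nthp_mono : StrictMono (Nat.nth Nat.Prime) :=
  Nat.nth_strictMono infp

private lemma nthp_zero : Nat.nth Nat.Prime 0 = 2 := by
  rw [Nat.nth_zero]
  refine le_antisymm (Nat.sInf_le Nat.prime_two) ?_
  exact Nat.Prime.two_le (Nat.sInf_mem (⟨2, Nat.prime_two⟩ : Set.Nonempty (setOf Nat.Prime)))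

private lemma two_lt_nthp {j : ℕ} (hj : 1 ≤ j) : 2 < Nat.nth Nat.Prime j := by
  rw [← nthp_zero]; exact nthp_mono hj

private lemma two_lt_nthp_iff (j : ℕ) : 2 < Nat.nth Nat.Prime j ↔ 1 ≤ j := by
  constructor
  · intro h
    rcases Nat.eq_zero_or_pos j with rfl | h'
    · rw [nthp_zero] at h; omega
    · exact h'
  · exact two_lt_nthp

/-- The injection sending the `i`-th smallest element of a set of odd primes to the
`(i+1)`-st prime. -/
private noncomputable def fInj (A : Finset ℕ) (p : ℕ) : ℕ :=
  Nat.nth Nat.Prime (1 + (A.filter (· < p)).card)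

private lemma fInj_le (A : Finset ℕ) (hA : ∀ p ∈ A, p.Prime ∧ 2 < p) {p : ℕ} (hp : p ∈ A) :
    fInj A p ≤ p := by
  have hsub : insert 2 (A.filter (· < p)) ⊆ (range p).filter Nat.Prime := by
    intro q hq
    simp only [mem_insert, mem_filter, mem_range] at hq ⊢
    rcases hq with rfl | ⟨hqA, hqp⟩
    · exact ⟨(hA p hp).2, Nat.prime_two⟩
    · exact ⟨hqp, (hA q hqA).1⟩
  have h2 : 2 ∉ A.filter (· < p) := by
    intro h
    exact absurd (hA 2 (mem_filter.mp h).1).2 (lt_irrefl 2)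
  have hcount : 1 + (A.filter (· < p)).card ≤ Nat.count Nat.Prime p := by
    rw [Nat.count_eq_card_filter_range]
    calc 1 + (A.filter (· < p)).card = (insert 2 (A.filter (· < p))).card := by
          rw [card_insert_of_notMem h2]; omega
      _ ≤ _ := card_le_card hsub
  calc fInj A p ≤ Nat.nth Nat.Prime (Nat.count Nat.Prime p) := nthp_mono.monotone hcount
    _ = p := Nat.nth_count (hA p hp).1

private lemma fInj_injOn (A : Finset ℕ) : Set.InjOn (fInj A) A := by
  have key : ∀ p ∈ A, ∀ q ∈ A, fInj A p = fInj A q → p < q → False := by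
    intro p hp q hq h hlt
    have hss : A.filter (· < p) ⊂ A.filter (· < q) := by
      refine ⟨monotone_filter_right A (fun x _ hx => lt_trans hx hlt), fun hsub => ?_⟩
      have : p ∈ A.filter (· < q) := mem_filter.mpr ⟨hp, hlt⟩
      have := mem_filter.mp (hsub this)
      exact lt_irrefl p this.2
    have hcard := card_lt_card hss
    have := nthp_mono.injective h
    omega
  intro p hp q hq h
  rcases lt_trichotomy p q with hlt | heq | hlt
  · exact absurd (key p (Finset.mem_coe.mp hp) q (Finset.mem_coe.mp hq) h hlt) not_false
  · exact heq
  · exact absurd (key q (Finset.mem_coe.mp hq) p (Finset.mem_coe.mp hp) h.symm hlt) not_false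

private lemma fInj_index_le (A : Finset ℕ) {p : ℕ} (hp : p ∈ A) :
    1 + (A.filter (· < p)).card ≤ A.card := by
  have hsub : A.filter (· < p) ⊆ A.erase p := by
    intro q hq
    rw [mem_filter] at hq
    exact mem_erase.mpr ⟨Nat.ne_of_lt hq.2, hq.1⟩
  have h1 := card_le_card hsub
  have h2 := card_erase_of_mem hp
  have h3 : 1 ≤ A.card := card_pos.mpr ⟨p, hp⟩
  omega

private lemma fInj_mem (A : Finset ℕ) (m : ℕ) (hcard : A.card ≤ m) {p : ℕ} (hp : p ∈ A) :
    fInj A p ∈ (Ico 1 (m + 1)).image (Nat.nth Nat.Prime) := by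
  refine mem_image.mpr ⟨1 + (A.filter (· < p)).card, mem_Ico.mpr ⟨by omega, ?_⟩, rfl⟩
  have := fInj_index_le A hp
  omega

private lemma primorial_tail_le (A : Finset ℕ) (hA : ∀ p ∈ A, p.Prime ∧ 2 < p) (m : ℕ)
    (hcard : A.card = m) :
    ∏ j ∈ Ico 1 (m + 1), Nat.nth Nat.Prime j ≤ ∏ p ∈ A, p := by
  have himg : A.image (fInj A) = (Ico 1 (m + 1)).image (Nat.nth Nat.Prime) := by
    apply eq_of_subset_of_card_le
    · intro q hq
      obtain ⟨p, hp, rfl⟩ := mem_image.mp hq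
      exact fInj_mem A m hcard.le hp
    · rw [card_image_of_injOn (nthp_mono.injective.injOn), Nat.card_Ico,
        card_image_of_injOn (fInj_injOn A), hcard]
      omega
  calc ∏ j ∈ Ico 1 (m + 1), Nat.nth Nat.Prime j
      = ∏ q ∈ (Ico 1 (m + 1)).image (Nat.nth Nat.Prime), q :=
        (prod_image (f := fun q => q) (fun x _ y _ h => nthp_mono.injective h)).symm
    _ = ∏ q ∈ A.image (fInj A), q := by rw [himg]
    _ = ∏ p ∈ A, fInj A p :=
        prod_image (f := fun q => q) (fun x hx y hy h => fInj_injOn A hx hy h)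
    _ ≤ ∏ p ∈ A, p := Finset.prod_le_prod' (fun p hp => fInj_le A hA hp)

private lemma mem_odd_primeFactors {d p : ℕ} (hp : p ∈ d.primeFactors.filter (fun p => 2 < p)) :
    p.Prime ∧ 2 < p := by
  rw [mem_filter, Nat.mem_primeFactors] at hp
  exact ⟨hp.1.1, hp.2⟩

private lemma range_split (k : ℕ) (hk : 1 ≤ k) : range k = insert 0 (Ico 1 k) := by
  ext x; simp only [mem_range, mem_insert, mem_Ico]; omega

private lemma primorial_eq (k : ℕ) (hk : 1 ≤ k) :
    nthPrimorial k = 2 * ∏ j ∈ Ico 1 k, Nat.nth Nat.Prime j := by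
  rw [nthPrimorial, range_split k hk, prod_insert (by simp), nthp_zero]

private lemma card_odd_primeFactors (k d : ℕ) (hk : 2 ≤ k) (hd : 0 < d) (hde : Even d)
    (hdk : d < nthPrimorial k) : (d.primeFactors.filter (fun p => 2 < p)).card ≤ k - 2 := by
  by_contra h
  push_neg at h
  obtain ⟨S', hS'sub, hS'card⟩ :=
    Finset.exists_subset_card_eq
      (by omega : k - 1 ≤ (d.primeFactors.filter (fun p => 2 < p)).card)
  have hA : ∀ p ∈ S', p.Prime ∧ 2 < p := fun p hp => mem_odd_primeFactors (hS'sub hp)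
  have h2S' : 2 ∉ S' := fun h => absurd (hA 2 h).2 (lt_irrefl 2)
  have hins : insert 2 S' ⊆ d.primeFactors := by
    intro q hq
    rcases mem_insert.mp hq with rfl | hq
    · exact Nat.mem_primeFactors.mpr ⟨Nat.prime_two, hde.two_dvd, hd.ne'⟩
    · exact (filter_subset _ _) (hS'sub hq)
  have hdvd : 2 * ∏ p ∈ S', p ∣ d := by
    have := prod_dvd_prod_of_subset (insert 2 S') d.primeFactors (fun p => p) hins
    rw [prod_insert h2S'] at this
    exact this.trans (Nat.prod_primeFactors_dvd d)
  have hle : 2 * ∏ p ∈ S', p ≤ d := Nat.le_of_dvd hd hdvd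
  have htail := primorial_tail_le S' hA (k - 1) hS'card
  have hkk : k - 1 + 1 = k := by omega
  rw [hkk] at htail
  have : nthPrimorial k ≤ d := by
    rw [primorial_eq k (by omega)]
    calc 2 * ∏ j ∈ Ico 1 k, Nat.nth Nat.Prime j ≤ 2 * ∏ p ∈ S', p := by
          exact Nat.mul_le_mul_left 2 htail
      _ ≤ d := hle
  omega

private lemma primorial_filter (m : ℕ) :
    (nthPrimorial m).primeFactors.filter (fun p => 2 < p)
      = (Ico 1 m).image (Nat.nth Nat.Prime) := by
  have h1 : (nthPrimorial m).primeFactors = (range m).image (Nat.nth Nat.Prime) := by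
    rw [nthPrimorial,
      ← Finset.prod_image (f := fun q => q) (fun x _ y _ h => nthp_mono.injective h)]
    exact Nat.primeFactors_prod (fun p hp => by
      obtain ⟨j, _, rfl⟩ := mem_image.mp hp; exact nthp_prime j)
  rw [h1, filter_image]
  congr 1
  ext j
  simp only [mem_filter, mem_range, mem_Ico, two_lt_nthp_iff]
  omega

private lemma one_le_g {q : ℕ} (hq : 2 < q) : (1 : ℝ) ≤ 1 + 1 / ((q : ℝ) - 2) := by
  have : (1 : ℝ) ≤ (q : ℝ) - 2 := by
    have : (3 : ℕ) ≤ q := hq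
    have := Nat.cast_le (α := ℝ).mpr this
    push_cast at this ⊢
    linarith
  have : (0 : ℝ) < 1 / ((q : ℝ) - 2) := by positivity
  linarith

private lemma prod_g_le (A : Finset ℕ) (hA : ∀ p ∈ A, p.Prime ∧ 2 < p) (m : ℕ)
    (hcard : A.card ≤ m) :
    ∏ p ∈ A, (1 + 1 / ((p : ℝ) - 2))
      ≤ ∏ q ∈ (Ico 1 (m + 1)).image (Nat.nth Nat.Prime), (1 + 1 / ((q : ℝ) - 2)) := by
  have step1 : ∏ p ∈ A, (1 + 1 / ((p : ℝ) - 2))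
      ≤ ∏ p ∈ A, (1 + 1 / ((fInj A p : ℝ) - 2)) := by
    apply Finset.prod_le_prod
    · intro p hp
      have := one_le_g (hA p hp).2
      linarith
    · intro p hp
      have hfle : fInj A p ≤ p := fInj_le A hA hp
      have hf3 : 3 ≤ fInj A p := by
        have h2 : 2 < fInj A p := two_lt_nthp (by omega)
        omega
      have hp3 : 3 ≤ p := (hA p hp).2
      have h1 : (1 : ℝ) ≤ (fInj A p : ℝ) - 2 := by
        have := Nat.cast_le (α := ℝ).mpr hf3; push_cast at this ⊢; linarith
      have h2 : (fInj A p : ℝ) - 2 ≤ (p : ℝ) - 2 := by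
        have := Nat.cast_le (α := ℝ).mpr hfle; linarith
      have := one_div_le_one_div_of_le (by linarith) h2
      linarith
  have step2 : ∏ p ∈ A, (1 + 1 / ((fInj A p : ℝ) - 2))
      = ∏ q ∈ A.image (fInj A), (1 + 1 / ((q : ℝ) - 2)) :=
    (prod_image (g := fInj A) (f := fun q : ℕ => (1 + 1 / ((q : ℝ) - 2)))
      (fun x hx y hy h => fInj_injOn A hx hy h)).symm
  have step3 : ∏ q ∈ A.image (fInj A), (1 + 1 / ((q : ℝ) - 2))
      ≤ ∏ q ∈ (Ico 1 (m + 1)).image (Nat.nth Nat.Prime), (1 + 1 / ((q : ℝ) - 2)) := by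
    have hsub : A.image (fInj A) ⊆ (Ico 1 (m + 1)).image (Nat.nth Nat.Prime) := by
      intro q hq
      obtain ⟨p, hp, rfl⟩ := mem_image.mp hq
      exact fInj_mem A m hcard hp
    have h1 : (1 : ℝ) ≤ ∏ q ∈ ((Ico 1 (m + 1)).image (Nat.nth Nat.Prime)) \ A.image (fInj A),
        (1 + 1 / ((q : ℝ) - 2)) := by
      have h := Finset.prod_le_prod
        (s := ((Ico 1 (m + 1)).image (Nat.nth Nat.Prime)) \ A.image (fInj A))
        (f := fun _ => (1 : ℝ)) (g := fun q : ℕ => (1 + 1 / ((q : ℝ) - 2)))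
        (fun i _ => by norm_num)
        (fun q hq => by
          obtain ⟨j, hj, rfl⟩ := mem_image.mp (sdiff_subset hq)
          exact one_le_g (two_lt_nthp (mem_Ico.mp hj).1))
      simpa using h
    have h0 : (0 : ℝ) ≤ ∏ q ∈ A.image (fInj A), (1 + 1 / ((q : ℝ) - 2)) := by
      apply Finset.prod_nonneg
      intro q hq
      obtain ⟨p, hp, rfl⟩ := mem_image.mp hq
      have hf3 : 2 < fInj A p := two_lt_nthp (by omega)
      have := one_le_g hf3
      linarith
    rw [← prod_sdiff hsub]
    nlinarith
  linarith

theorem singSeries_monotone_primorial (C₂ : ℝ) (hC₂ : 0 < C₂) (k d : ℕ) (hk : 2 ≤ k)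
    (hd : 0 < d) (hde : Even d) (hdk : d < nthPrimorial k) :
    singSeries C₂ d ≤ singSeries C₂ (nthPrimorial (k - 1)) ∧
      singSeries C₂ (nthPrimorial (k - 1)) < singSeries C₂ (nthPrimorial k) := by
  have h2C : (0 : ℝ) < 2 * C₂ := by linarith
  constructor
  · -- monotonicity from d
    have hcard := card_odd_primeFactors k d hk hd hde hdk
    have hA : ∀ p ∈ d.primeFactors.filter (fun p => 2 < p), p.Prime ∧ 2 < p :=
      fun p hp => mem_odd_primeFactors hp
    have := prod_g_le _ hA (k - 2) hcard
    have hkk : k - 2 + 1 = k - 1 := by omega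
    rw [hkk] at this
    rw [singSeries, singSeries, primorial_filter (k - 1)]
    exact mul_le_mul_of_nonneg_left this h2C.le
  · -- strict increase at primorials
    rw [singSeries, singSeries, primorial_filter (k - 1), primorial_filter k]
    apply mul_lt_mul_of_pos_left _ h2C
    have hsplit : Ico 1 k = insert (k - 1) (Ico 1 (k - 1)) := by
      ext x; simp only [mem_Ico, mem_insert]; omega
    have hnotmem : Nat.nth Nat.Prime (k - 1) ∉ (Ico 1 (k - 1)).image (Nat.nth Nat.Prime) := by
      intro h
      obtain ⟨j, hj, hjeq⟩ := mem_image.mp h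
      have := nthp_mono.injective hjeq
      rw [mem_Ico] at hj
      omega
    rw [hsplit, image_insert, prod_insert hnotmem]
    have hpos : (0 : ℝ) < ∏ q ∈ (Ico 1 (k - 1)).image (Nat.nth Nat.Prime),
        (1 + 1 / ((q : ℝ) - 2)) := by
      apply Finset.prod_pos
      intro q hq
      obtain ⟨j, hj, rfl⟩ := mem_image.mp hq
      have := one_le_g (two_lt_nthp (mem_Ico.mp hj).1)
      linarith
    have hgt : (1 : ℝ) < 1 + 1 / ((Nat.nth Nat.Prime (k - 1) : ℝ) - 2) := by
      have h3 : 3 ≤ Nat.nth Nat.Prime (k - 1) := two_lt_nthp (by omega)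
      have h1 : (1 : ℝ) ≤ (Nat.nth Nat.Prime (k - 1) : ℝ) - 2 := by
        have := Nat.cast_le (α := ℝ).mpr h3; push_cast at this ⊢; linarith
      have : (0 : ℝ) < 1 / ((Nat.nth Nat.Prime (k - 1) : ℝ) - 2) := by positivity
      linarith
    nlinarith
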